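/- arXiv:2312.10012 — 2 statements merged into one kernel-verified Lean document; each statement's English description precedes it below -/
import Mathlib

section
/- Let C be a U(ℍ)-gain cycle on n ≥ 3 edges with vertices v₁,…,v_n and edges ordered so that the incidence matrix H(C) = (η_{ij}) ∈ ℍ^{n×n} has nonzero entries η_{jj} = 1 for j = 1,…,n, η_{j,j+1} = −φ(e_{j,j+1}) for j = 1,…,n−1, and η_{n,1} = −φ(e_{n,1}). Then rdet₁ H(C) = 1 − φ(C), where φ(C) = φ(e_{12})φ(e_{23})⋯φ(e_{n-1,n})φ(e_{n,1}). -/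
open scoped Quaternion
open Matrix

noncomputable section

abbrev ℍq : Type := ℍ[ℝ]

section RowColDet

variable {ι : Type*} [Fintype ι] [LinearOrder ι]

/-- The orbit of `cur` under `σ`, stopping when the orbit returns to `start`. -/
def orbitAux (σ : Equiv.Perm ι) (start : ι) : ℕ → ι → List ι
  | 0, _ => []
  | fuel + 1, cur => cur :: (if σ cur = start then [] else orbitAux σ start fuel (σ cur))

/-- The cycle of `σ` containing `x`, listed as `[x, σ x, σ² x, …]`. -/
def orbitList (σ : Equiv.Perm ι) (x : ι) : List ι :=
  orbitAux σ x (Fintype.card ι) x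

def groupsAux (σ : Equiv.Perm ι) : List ι → List ι → List (List ι)
  | [], _ => []
  | x :: rest, visited =>
      if x ∈ visited then groupsAux σ rest visited
      else orbitList σ x :: groupsAux σ rest (visited ++ orbitList σ x)

/-- The canonical disjoint-cycle listing of `σ`: the first cycle begins with `i`,
every other cycle begins with its smallest element, and the leading elements of
the remaining cycles appear in increasing order. -/
def cycleGroups (σ : Equiv.Perm ι) (i : ι) : List (List ι) :=
  orbitList σ i :: groupsAux σ (Finset.sort Finset.univ (· ≤ ·)) (orbitList σ i)

/-- The `i`-th row determinant of a quaternion matrix: the cycles of each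
permutation are ordered from left to right (first cycle beginning with `i`),
and within each cycle the factors `a_{x, σ x}` are multiplied following the cycle. -/
def rdet (A : Matrix ι ι ℍq) (i : ι) : ℍq :=
  ∑ σ : Equiv.Perm ι,
    ((Equiv.Perm.sign σ : ℤ) : ℍq) *
      ((cycleGroups σ i).map fun g => (g.map fun x => A x (σ x)).prod).prod

/-- The `j`-th column determinant of a quaternion matrix: the cycles of each
permutation are ordered from right to left (the rightmost cycle containing `j`). -/
def cdet (A : Matrix ι ι ℍq) (j : ι) : ℍq :=
  ∑ τ : Equiv.Perm ι,
    ((Equiv.Perm.sign τ : ℤ) : ℍq) *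
      (((cycleGroups τ j).reverse).map fun g => (g.map fun x => A x (τ x)).prod).prod

/-- The determinant of a (Hermitian) quaternion matrix: the common value of all
row and column determinants (here computed as the row determinant at the least index). -/
def qdet (A : Matrix ι ι ℍq) : ℍq :=
  letI := Classical.dec (Nonempty ι)
  if h : Nonempty ι then rdet A (Finset.univ.min' (by rwa [Finset.univ_nonempty_iff])) else 1

end RowColDet


/-- cyclic successor on `Fin n` -/
def cycSucc {s : ℕ} (k : Fin s) : Fin s := ⟨(k.1 + 1) % s, Nat.mod_lt _ k.pos⟩
section MyAux

variable {ι : Type*} [Fintype ι] [LinearOrder ι]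

lemma orbitList_mem_self' [Nonempty ι] (σ : Equiv.Perm ι) (x : ι) : x ∈ orbitList σ x := by
  unfold orbitList
  rcases Nat.exists_eq_succ_of_ne_zero (Fintype.card_pos (α := ι)).ne' with ⟨m, hm⟩
  rw [hm, orbitAux]
  exact List.mem_cons_self

lemma orbitList_one' [Nonempty ι] (y : ι) : orbitList (1 : Equiv.Perm ι) y = [y] := by
  unfold orbitList
  rcases Nat.exists_eq_succ_of_ne_zero (Fintype.card_pos (α := ι)).ne' with ⟨m, hm⟩
  rw [hm, orbitAux]
  simp

lemma groupsAux_shape' (σ : Equiv.Perm ι) (l : List ι) :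
    ∀ visited, ∀ gl ∈ groupsAux σ l visited, ∃ y, gl = orbitList σ y := by
  induction l with
  | nil => intro v gl h; simp [groupsAux] at h
  | cons a rest ih =>
    intro v gl h
    rw [groupsAux] at h
    split at h
    · exact ih _ gl h
    · rcases List.mem_cons.mp h with h | h
      · exact ⟨a, h⟩
      · exact ih _ gl h

lemma groupsAux_covers' [Nonempty ι] (σ : Equiv.Perm ι) (l : List ι) :
    ∀ visited, ∀ x ∈ l, x ∈ visited ∨ ∃ gl ∈ groupsAux σ l visited, x ∈ gl := by
  induction l with
  | nil => simp
  | cons a rest ih =>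
    intro v x hx
    rw [groupsAux]
    rcases List.mem_cons.mp hx with rfl | hx
    · split
      · left; assumption
      · right
        exact ⟨orbitList σ x, List.mem_cons_self, orbitList_mem_self' σ x⟩
    · split
      · exact ih v x hx
      · rcases ih (v ++ orbitList σ a) x hx with h | ⟨gl, hgl, hx'⟩
        · rcases List.mem_append.mp h with h | h
          · exact Or.inl h
          · exact Or.inr ⟨orbitList σ a, List.mem_cons_self, h⟩
        · exact Or.inr ⟨gl, List.mem_cons_of_mem _ hgl, hx'⟩

lemma groupsAux_eq_nil_of_subset' (σ : Equiv.Perm ι) (l : List ι) :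
    ∀ visited, (∀ x ∈ l, x ∈ visited) → groupsAux σ l visited = [] := by
  induction l with
  | nil => intro v _; rfl
  | cons a rest ih =>
    intro v hv
    rw [groupsAux, if_pos (hv a (List.mem_cons_self))]
    exact ih v fun x hx => hv x (List.mem_cons_of_mem _ hx)

lemma cycleGroups_covers' [Nonempty ι] (σ : Equiv.Perm ι) (i x : ι) :
    ∃ gl ∈ cycleGroups σ i, x ∈ gl := by
  have hx : x ∈ Finset.sort Finset.univ (· ≤ ·) :=
    (Finset.mem_sort _).mpr (Finset.mem_univ x)
  rcases groupsAux_covers' σ _ (orbitList σ i) x hx with h | ⟨gl, hgl, hx'⟩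
  · exact ⟨orbitList σ i, List.mem_cons_self, h⟩
  · exact ⟨gl, List.mem_cons_of_mem _ hgl, hx'⟩

lemma cycleGroups_shape' (σ : Equiv.Perm ι) (i : ι) :
    ∀ gl ∈ cycleGroups σ i, ∃ y, gl = orbitList σ y := by
  intro gl h
  rcases List.mem_cons.mp h with h | h
  · exact ⟨i, h⟩
  · exact groupsAux_shape' σ _ _ gl h

end MyAux

lemma neg_map_prod' {α : Type*} (f : α → ℍq) (l : List α) :
    (l.map fun x => -f x).prod = (-1 : ℍq) ^ l.length * (l.map f).prod := by
  induction l with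
  | nil => simp
  | cons a t ih =>
    have hc : Commute ((-1 : ℍq) ^ t.length) (f a) :=
      (Commute.neg_one_left (f a)).pow_left _
    simp only [List.map_cons, List.prod_cons, List.length_cons, ih, pow_succ]
    rw [neg_mul, ← mul_assoc, ← hc.eq, mul_assoc, mul_neg_one, neg_mul]

lemma succ_mod' (n k : ℕ) (h : k < n) : (k + 1) % n = if k + 1 = n then 0 else k + 1 := by
  by_cases h' : k + 1 = n
  · simp [h', Nat.mod_self]
  · rw [if_neg h']
    exact Nat.mod_eq_of_lt (by omega)

lemma cycSucc_eq_add_one {n : ℕ} [NeZero n] (hn : 2 ≤ n) (x : Fin n) : cycSucc x = x + 1 := by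
  apply Fin.ext
  have h1 : (1 : Fin n).val = 1 := by
    rw [Fin.val_one']
    exact Nat.mod_eq_of_lt (by omega)
  simp [cycSucc, Fin.add_def, h1]

lemma cycSucc_ne_self {n : ℕ} (hn : 2 ≤ n) (x : Fin n) : cycSucc x ≠ x := by
  intro h
  have h' := congrArg Fin.val h
  simp only [cycSucc] at h'
  rw [succ_mod' _ _ x.isLt] at h'
  split at h' <;> omega

lemma orbit_rot {n : ℕ} (hn : 2 ≤ n) (σ : Equiv.Perm (Fin n)) (hσ : ∀ y, σ y = cycSucc y) :
    ∀ m, 1 ≤ m → m ≤ n → ∀ (h : n - m < n),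
      orbitAux σ ⟨0, by omega⟩ m ⟨n - m, h⟩ = (List.finRange n).drop (n - m) := by
  intro m hm1
  induction m, hm1 using Nat.le_induction with
  | base =>
    intro _ h
    rw [orbitAux]
    have hlen : n - 1 < (List.finRange n).length := by simp; omega
    rw [List.drop_eq_getElem_cons hlen]
    have h2 : (List.finRange n).drop (n - 1 + 1) = [] := by
      apply List.drop_eq_nil_of_le; simp; omega
    rw [h2, List.getElem_finRange]
    congr 1
    split
    · rfl
    · rw [orbitAux]
  | succ m hm ih =>
    intro hm2 h
    rw [orbitAux]
    have hσ' : σ ⟨n - (m + 1), h⟩ = ⟨n - m, by omega⟩ := by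
      rw [hσ]
      apply Fin.ext
      simp only [cycSucc]
      rw [succ_mod' _ _ (by omega : n - (m + 1) < n), if_neg (by omega)]
      omega
    rw [hσ', if_neg (by intro hcon; have := congrArg Fin.val hcon; simp at this; omega)]
    rw [ih (by omega) (by omega)]
    have hlen : n - (m + 1) < (List.finRange n).length := by simp; omega
    rw [List.drop_eq_getElem_cons hlen, List.getElem_finRange]
    congr 2
    omega

open Fin.NatCast

/-- **Lemma.** For the incidence matrix `H(C)` of a `U(ℍ)`-gain cycle on `n ≥ 3` edges,
with `η_{jj} = 1`, `η_{j,j+1} = -φ(e_{j,j+1})` (indices mod `n`), one has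
`rdet₁ H(C) = 1 - φ(C)` where `φ(C) = φ(e_{12}) φ(e_{23}) ⋯ φ(e_{n,1})`. -/
theorem rdet_one_incidence_of_cycle (n : ℕ) (hn : 3 ≤ n) (g : Fin n → ℍq)
    (hg : ∀ k, Quaternion.normSq (g k) = 1) :
    rdet (Matrix.of fun i j : Fin n =>
        if j = i then 1 else if j = cycSucc i then -g i else 0) ⟨0, by omega⟩
      = 1 - ((List.finRange n).map g).prod := by
  obtain ⟨m, rfl⟩ : ∃ m, n = m + 1 := ⟨n - 1, by omega⟩
  have hm : 2 ≤ m := by omega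
  set A : Matrix (Fin (m + 1)) (Fin (m + 1)) ℍq := Matrix.of fun i j : Fin (m + 1) =>
      if j = i then 1 else if j = cycSucc i then -g i else 0 with hA
  set i0 : Fin (m + 1) := ⟨0, by omega⟩ with hi0
  letI : DecidableEq (Fin (m + 1)) := fun a b => instDecidableEqFin _ a b
  have hA_diag : ∀ x, A x x = 1 := by intro x; simp [hA]
  have hA_succ : ∀ x, A x (cycSucc x) = -g x := by
    intro x
    simp [hA, Matrix.of_apply, if_neg (cycSucc_ne_self (by omega) x)]
  have hA_zero : ∀ x y, y ≠ x → y ≠ cycSucc x → A x y = 0 := by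
    intro x y h1 h2; simp [hA, Matrix.of_apply, if_neg h1, if_neg h2]
  set c : Equiv.Perm (Fin (m + 1)) := finRotate (m + 1) with hcdef
  have hc : ∀ y, c y = cycSucc y := by
    intro y
    rw [hcdef, finRotate_succ_apply, cycSucc_eq_add_one (by omega)]
  have hone : (1 : Fin (m + 1)) ≠ 0 := by
    intro h
    have h' := congrArg Fin.val h
    rw [Fin.val_one', Fin.val_zero, Nat.mod_eq_of_lt (by omega)] at h'
    exact one_ne_zero h'
  -- vanishing of all other terms
  have hzero : ∀ σ : Equiv.Perm (Fin (m + 1)), σ ≠ 1 → σ ≠ c →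
      ((Equiv.Perm.sign σ : ℤ) : ℍq) *
        ((cycleGroups σ i0).map fun gl => (gl.map fun x => A x (σ x)).prod).prod = 0 := by
    intro σ h1 h2
    obtain ⟨x, hx1, hx2⟩ : ∃ x, σ x ≠ x ∧ σ x ≠ cycSucc x := by
      by_contra hcon
      push_neg at hcon
      obtain ⟨x₀, hx₀⟩ : ∃ x₀, σ x₀ ≠ x₀ := by
        by_contra hall
        push_neg at hall
        exact h1 (Equiv.ext hall)
      have key : ∀ k : ℕ, σ (x₀ + (k : Fin (m + 1))) = x₀ + (k : Fin (m + 1)) + 1 := by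
        intro k
        induction k with
        | zero =>
          simpa [← cycSucc_eq_add_one (show 2 ≤ m + 1 by omega)] using hcon x₀ hx₀
        | succ k ih =>
          have hcast : ((k + 1 : ℕ) : Fin (m + 1)) = (k : Fin (m + 1)) + 1 := by push_cast; ring
          rw [hcast]
          have hne' : σ (x₀ + (k : Fin (m + 1)) + 1) ≠ x₀ + (k : Fin (m + 1)) + 1 := by
            intro h
            have heq : σ (x₀ + (k : Fin (m + 1)) + 1) = σ (x₀ + (k : Fin (m + 1))) := by
              rw [h, ih]
            have h2' := σ.injective heq
            have h3 : x₀ + (k : Fin (m + 1)) + 1 = x₀ + (k : Fin (m + 1)) + 0 := by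
              rw [add_zero]; exact h2'
            exact hone (add_left_cancel h3)
          rw [← add_assoc, hcon _ hne', cycSucc_eq_add_one (by omega)]
      have hall2 : ∀ y, σ y = c y := by
        intro y
        have hy : x₀ + ((y - x₀ : Fin (m + 1)).val : Fin (m + 1)) = y := by
          rw [Fin.cast_val_eq_self]
          abel
        have hk := key (y - x₀).val
        rw [hy] at hk
        rw [hk, hcdef, finRotate_succ_apply]
      exact h2 (Equiv.ext hall2)
    obtain ⟨gl, hgl, hxgl⟩ := cycleGroups_covers' σ i0 x
    have hgl0 : (gl.map fun y => A y (σ y)).prod = 0 := by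
      apply List.prod_eq_zero
      have h0 : A x (σ x) = 0 := hA_zero x (σ x) hx1 hx2
      exact h0 ▸ List.mem_map_of_mem hxgl
    have hout : ((cycleGroups σ i0).map fun gl => (gl.map fun x => A x (σ x)).prod).prod = 0 := by
      apply List.prod_eq_zero
      exact hgl0 ▸ List.mem_map_of_mem hgl
    rw [hout, mul_zero]
  have h1c : (1 : Equiv.Perm (Fin (m + 1))) ≠ c := by
    intro h
    have h' := congrArg (fun e : Equiv.Perm (Fin (m + 1)) => e 0) h
    simp only [Equiv.Perm.one_apply] at h'
    rw [hcdef, finRotate_succ_apply, zero_add] at h'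
    exact hone h'.symm
  -- value at identity
  have hF1 : ((Equiv.Perm.sign (1 : Equiv.Perm (Fin (m + 1))) : ℤ) : ℍq) *
      ((cycleGroups (1 : Equiv.Perm (Fin (m + 1))) i0).map
        fun gl => (gl.map fun x => A x ((1 : Equiv.Perm (Fin (m + 1))) x)).prod).prod = 1 := by
    have hprod : ∀ z ∈ (cycleGroups (1 : Equiv.Perm (Fin (m + 1))) i0).map
        (fun gl => (gl.map fun x => A x ((1 : Equiv.Perm (Fin (m + 1))) x)).prod), z = 1 := by
      intro z hz
      obtain ⟨gl, hgl, rfl⟩ := List.mem_map.mp hz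
      obtain ⟨y, rfl⟩ := cycleGroups_shape' _ _ gl hgl
      rw [orbitList_one']
      simp [hA_diag]
    rw [List.prod_eq_one hprod]
    simp
  -- value at the long cycle
  have horb : orbitList c i0 = List.finRange (m + 1) := by
    unfold orbitList
    rw [Fintype.card_fin]
    have h := orbit_rot (n := m + 1) (by omega) c hc (m + 1) (by omega) (le_refl _) (by omega)
    simp only [Nat.sub_self, List.drop_zero] at h
    exact h
  have hcg : cycleGroups c i0 = [List.finRange (m + 1)] := by
    rw [cycleGroups, horb]
    rw [groupsAux_eq_nil_of_subset' _ _ _ (fun x _ => List.mem_finRange x)]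
  have hFc : ((Equiv.Perm.sign c : ℤ) : ℍq) *
      ((cycleGroups c i0).map fun gl => (gl.map fun x => A x (c x)).prod).prod
      = -((List.finRange (m + 1)).map g).prod := by
    rw [hcg]
    have hmapeq : (List.finRange (m + 1)).map (fun x => A x (c x))
        = (List.finRange (m + 1)).map (fun x => -g x) := by
      apply List.map_congr_left
      intro x _
      rw [hc x, hA_succ]
    simp only [List.map_cons, List.map_nil, List.prod_cons, List.prod_nil, mul_one]
    rw [hmapeq, neg_map_prod', List.length_finRange]
    have hsign : ((Equiv.Perm.sign c : ℤ) : ℍq) = (-1 : ℍq) ^ m := by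
      have hs : Equiv.Perm.sign c = (-1) ^ m := by
        rw [hcdef, sign_finRotate, Nat.add_sub_cancel]
      rw [hs]
      push_cast
      ring_nf
    rw [hsign, ← mul_assoc, ← pow_add]
    have hodd : Odd (m + (m + 1)) := ⟨m, by ring⟩
    rw [hodd.neg_one_pow, neg_one_mul]
  have hsub := Finset.sum_subset (f := fun σ : Equiv.Perm (Fin (m + 1)) =>
      ((Equiv.Perm.sign σ : ℤ) : ℍq) *
        ((cycleGroups σ i0).map fun gl => (gl.map fun x => A x (σ x)).prod).prod)
    (Finset.subset_univ ({1, c} : Finset (Equiv.Perm (Fin (m + 1)))))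
    (fun σ _ hσ => by
      simp only [Finset.mem_insert, Finset.mem_singleton, not_or] at hσ
      exact hzero σ hσ.1 hσ.2)
  have hred : rdet A i0 = ∑ σ ∈ ({1, c} : Finset (Equiv.Perm (Fin (m + 1)))),
      ((Equiv.Perm.sign σ : ℤ) : ℍq) *
        ((cycleGroups σ i0).map fun gl => (gl.map fun x => A x (σ x)).prod).prod := by
    rw [rdet]
    exact hsub.symm
  rw [hred, Finset.sum_pair h1c, hF1, hFc, sub_eq_add_neg]
end
end

section
/- Let A ∈ ℍ^{n×n} be a quaternion matrix. Then for every i = 1,…,n, rdet_i(A*) = conj(cdet_i A), where A* is the conjugate transpose of A and conj denotes quaternion conjugation. -/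
open scoped Quaternion
open Matrix

noncomputable section

section AuxProofs

open Equiv Function List

variable {ι : Type*} [Fintype ι] [LinearOrder ι]

lemma orbitAux_eq (σ : Equiv.Perm ι) (x : ι) (m : ℕ) (hm : (σ ^ m) x = x)
    (hmin : ∀ k, 0 < k → k < m → (σ ^ k) x ≠ x) :
    ∀ fuel j, j < m → m - j ≤ fuel →
      orbitAux σ x fuel ((σ ^ j) x) = (List.range' j (m - j)).map fun k => (σ ^ k) x := by
  intro fuel
  induction fuel with
  | zero => intro j hj h; omega
  | succ fuel ih =>
    intro j hj h
    have hs : σ ((σ ^ j) x) = (σ ^ (j + 1)) x := by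
      rw [pow_succ', Equiv.Perm.mul_apply]
    rw [orbitAux]
    by_cases hj1 : j + 1 = m
    · have hc : σ ((σ ^ j) x) = x := by rw [hs, hj1, hm]
      rw [if_pos hc]
      have h1 : m - j = 1 := by omega
      simp [h1]
    · have hlt : j + 1 < m := by omega
      have hne : σ ((σ ^ j) x) ≠ x := by rw [hs]; exact hmin _ (by omega) hlt
      rw [if_neg hne, hs, ih (j + 1) hlt (by omega)]
      have h1 : m - j = (m - (j + 1)) + 1 := by omega
      rw [h1, List.range'_succ]
      simp

lemma perm_mem_periodicPts (σ : Equiv.Perm ι) (x : ι) : x ∈ Function.periodicPts σ := by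
  refine ⟨orderOf σ, orderOf_pos σ, ?_⟩
  show (⇑σ)^[orderOf σ] x = x
  rw [Equiv.Perm.iterate_eq_pow, pow_orderOf_eq_one]
  rfl

lemma minPer_pos (σ : Equiv.Perm ι) (x : ι) : 0 < Function.minimalPeriod σ x :=
  Function.minimalPeriod_pos_of_mem_periodicPts (perm_mem_periodicPts σ x)

lemma pow_minPer (σ : Equiv.Perm ι) (x : ι) : (σ ^ Function.minimalPeriod σ x) x = x := by
  have := Function.iterate_minimalPeriod (f := ⇑σ) (x := x)
  rwa [Equiv.Perm.iterate_eq_pow] at this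

lemma pow_ne_of_lt_minPer (σ : Equiv.Perm ι) (x : ι) {k : ℕ} (hk : 0 < k)
    (hk' : k < Function.minimalPeriod σ x) : (σ ^ k) x ≠ x := by
  intro h
  exact Function.not_isPeriodicPt_of_pos_of_lt_minimalPeriod (Nat.pos_iff_ne_zero.mp hk) hk'
    (by rwa [Function.IsPeriodicPt, Function.IsFixedPt, Equiv.Perm.iterate_eq_pow])

lemma minPer_le_card (σ : Equiv.Perm ι) (x : ι) :
    Function.minimalPeriod σ x ≤ Fintype.card ι := by
  classical
  have : (Finset.range (Function.minimalPeriod σ x)).card ≤ (Finset.univ : Finset ι).card := by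
    apply Finset.card_le_card_of_injOn (fun k => (σ ^ k) x) (fun a _ => Finset.mem_univ _)
    intro a ha b hb hab
    have := Function.iterate_injOn_Iio_minimalPeriod (f := ⇑σ) (x := x)
      (by simpa using (Finset.mem_coe.mp ha)) (by simpa using (Finset.mem_coe.mp hb))
      (by simpa [Equiv.Perm.iterate_eq_pow] using hab)
    exact this
  simpa using this

lemma orbitList_eq (σ : Equiv.Perm ι) (x : ι) :
    orbitList σ x =
      (List.range (Function.minimalPeriod σ x)).map fun k => (σ ^ k) x := by
  have h := orbitAux_eq σ x (Function.minimalPeriod σ x) (pow_minPer σ x)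
    (fun k hk hk' => pow_ne_of_lt_minPer σ x hk hk') (Fintype.card ι) 0
    (minPer_pos σ x) (by simpa using minPer_le_card σ x)
  simpa [orbitList, List.range_eq_range'] using h

lemma inv_pow_apply (σ : Equiv.Perm ι) (x : ι) {k : ℕ}
    (hk : k ≤ Function.minimalPeriod σ x) :
    ((σ⁻¹) ^ k) x = (σ ^ (Function.minimalPeriod σ x - k)) x := by
  apply (σ ^ k).injective
  rw [inv_pow]
  rw [Equiv.Perm.coe_inv, Equiv.apply_symm_apply]
  rw [← Equiv.Perm.mul_apply, ← pow_add]
  rw [show k + (Function.minimalPeriod σ x - k) = Function.minimalPeriod σ x by omega]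
  exact (pow_minPer σ x).symm

lemma minPer_inv (σ : Equiv.Perm ι) (x : ι) :
    Function.minimalPeriod (⇑σ⁻¹) x = Function.minimalPeriod σ x := by
  have key : ∀ (τ : Equiv.Perm ι) (n : ℕ), Function.IsPeriodicPt (⇑τ⁻¹) n x ↔
      Function.IsPeriodicPt (⇑τ) n x := by
    intro τ n
    simp only [Function.IsPeriodicPt, Function.IsFixedPt, Equiv.Perm.iterate_eq_pow, inv_pow]
    constructor
    · intro h; conv_lhs => rw [← h]
      rw [Equiv.Perm.coe_inv, Equiv.apply_symm_apply]
    · intro h; conv_lhs => rw [← h]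
      rw [Equiv.Perm.coe_inv, Equiv.symm_apply_apply]
  apply Nat.dvd_antisymm
  · exact Function.IsPeriodicPt.minimalPeriod_dvd ((key σ _).mpr
      (by rw [Function.IsPeriodicPt, Function.IsFixedPt, Equiv.Perm.iterate_eq_pow]
          exact pow_minPer σ x))
  · exact Function.IsPeriodicPt.minimalPeriod_dvd (by
      have h1 := Function.isPeriodicPt_minimalPeriod (⇑σ⁻¹) x
      have := (key σ _).mp h1
      rwa [Function.IsPeriodicPt, Function.IsFixedPt, Equiv.Perm.iterate_eq_pow] at this ⊢)

lemma orbitList_inv (σ : Equiv.Perm ι) (x : ι) :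
    orbitList σ⁻¹ x =
      (List.range (Function.minimalPeriod σ x)).map
        fun k => (σ ^ (Function.minimalPeriod σ x - k)) x := by
  rw [orbitList_eq, minPer_inv]
  apply List.map_congr_left
  intro k hk
  exact inv_pow_apply σ x (le_of_lt (List.mem_range.mp hk))

lemma mem_orbitList_inv (σ : Equiv.Perm ι) (x y : ι) :
    y ∈ orbitList σ⁻¹ x ↔ y ∈ orbitList σ x := by
  rw [orbitList_inv, orbitList_eq]
  simp only [List.mem_map, List.mem_range]
  have hpos := minPer_pos σ x
  constructor
  · rintro ⟨k, hk, rfl⟩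
    by_cases h0 : k = 0
    · subst h0
      simp only [Nat.sub_zero]
      exact ⟨0, hpos, by rw [pow_zero, pow_minPer]; rfl⟩
    · exact ⟨_, by omega, rfl⟩
  · rintro ⟨k, hk, rfl⟩
    by_cases h0 : k = 0
    · subst h0
      exact ⟨0, hpos, by rw [Nat.sub_zero, pow_minPer, pow_zero]; rfl⟩
    · exact ⟨Function.minimalPeriod σ x - k, by omega,
        by rw [show Function.minimalPeriod σ x - (Function.minimalPeriod σ x - k) = k by omega]⟩

lemma groupsAux_inv (σ : Equiv.Perm ι) :
    ∀ (l v v' : List ι), (∀ y, y ∈ v' ↔ y ∈ v) →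
      List.Forall₂ (fun g' g => ∃ x, g' = orbitList σ⁻¹ x ∧ g = orbitList σ x)
        (groupsAux σ⁻¹ l v') (groupsAux σ l v) := by
  intro l
  induction l with
  | nil => intro v v' h; simp [groupsAux]
  | cons x rest ih =>
    intro v v' h
    simp only [groupsAux]
    by_cases hx : x ∈ v
    · rw [if_pos hx, if_pos ((h x).mpr hx)]
      exact ih v v' h
    · rw [if_neg hx, if_neg (fun c => hx ((h x).mp c))]
      refine List.Forall₂.cons ⟨x, rfl, rfl⟩ (ih _ _ ?_)
      intro y
      simp only [List.mem_append, h y, mem_orbitList_inv]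

lemma cycleGroups_inv (σ : Equiv.Perm ι) (i : ι) :
    List.Forall₂ (fun g' g => ∃ x, g' = orbitList σ⁻¹ x ∧ g = orbitList σ x)
      (cycleGroups σ⁻¹ i) (cycleGroups σ i) := by
  refine List.Forall₂.cons ⟨i, rfl, rfl⟩ ?_
  exact groupsAux_inv σ _ _ _ (fun y => mem_orbitList_inv σ i y)

lemma star_list_prod (l : List ℍq) : star l.prod = (l.reverse.map star).prod := by
  induction l with
  | nil => simp
  | cons a t ih => simp [ih]

lemma key_orbit (A : Matrix ι ι ℍq) (σ : Equiv.Perm ι) (x : ι) :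
    ((orbitList σ x).map fun y => Aᴴ y (σ y)).prod
      = star (((orbitList σ⁻¹ x).map fun y => A y (σ⁻¹ y)).prod) := by
  set m := Function.minimalPeriod σ x with hmdef
  have hpos := minPer_pos σ x
  have hm := pow_minPer σ x
  rw [star_list_prod, ← List.map_reverse, List.map_map, orbitList_inv,
    ← List.map_reverse, List.range_eq_range', List.reverse_range', List.map_map,
    orbitList_eq, List.map_map, ← hmdef, List.map_map]
  refine congrArg List.prod (List.map_congr_left ?_)
  intro k hk
  rw [List.mem_range] at hk
  simp only [Function.comp_apply, Matrix.conjTranspose_apply]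
  have h1 : σ ((σ ^ k) x) = (σ ^ (k + 1)) x := by
    rw [pow_succ', Equiv.Perm.mul_apply]
  have h2 : (σ⁻¹) ((σ ^ (m - (0 + m - 1 - k))) x) = (σ ^ k) x := by
    rw [show m - (0 + m - 1 - k) = k + 1 by omega, pow_succ', Equiv.Perm.mul_apply,
      Equiv.Perm.coe_inv, Equiv.symm_apply_apply]
  rw [h1, h2, show m - (0 + m - 1 - k) = k + 1 by omega]

lemma forall₂_map_eq {α R : Type*} {r : α → α → Prop} {f g : α → R} :
    ∀ {l l' : List α}, List.Forall₂ r l l' → (∀ a b, r a b → f a = g b) →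
      l.map f = l'.map g := by
  intro l l' h hfg
  induction h with
  | nil => rfl
  | cons hab _ ih => simp only [List.map_cons, hfg _ _ hab, ih]

end AuxProofs

section MainAux
variable {ι : Type*} [Fintype ι] [LinearOrder ι]

lemma sum_star_inv (F G : Equiv.Perm ι → ℍq) (h : ∀ σ, F σ = star (G σ⁻¹)) :
    ∑ σ, F σ = star (∑ τ, G τ) := by
  rw [star_sum]
  exact Fintype.sum_equiv (Equiv.inv (Equiv.Perm ι)) _ _ fun sig => h sig

lemma rdet_conj_generic (A : Matrix ι ι ℍq) (i : ι) : rdet Aᴴ i = star (cdet A i) := by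
  rw [rdet, cdet]
  refine sum_star_inv _ _ fun sig => ?_
  rw [StarMul.star_mul, star_intCast, Equiv.Perm.sign_inv,
    ← (Int.cast_commute ((Equiv.Perm.sign sig : ℤ)) _).eq]
  congr 1
  rw [star_list_prod, ← List.map_reverse, List.reverse_reverse, List.map_map]
  refine congrArg List.prod ?_
  refine (forall₂_map_eq
    (f := star ∘ fun g => (List.map (fun x => A x (sig⁻¹ x)) g).prod)
    (g := fun g => (List.map (fun x => Aᴴ x (sig x)) g).prod)
    (cycleGroups_inv sig i) ?_).symm
  rintro g' g ⟨x, rfl, rfl⟩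
  exact (key_orbit A sig x).symm

end MainAux

/-- **Lemma.** `rdet_i (A*) = conj (cdet_i A)` for every `i`. -/


theorem rdet_conjTranspose_eq_star_cdet {n : ℕ} (A : Matrix (Fin n) (Fin n) ℍq)
    (i : Fin n) :
    rdet Aᴴ i = star (cdet A i) :=
  rdet_conj_generic A i
end
end
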